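/- arXiv:1712.07733 — 2 statements merged into one kernel-verified Lean document; each statement's English description precedes it below -/
import Mathlib

section
/- Let r₀ ≥ 0, ζ > 0, and let L be a function which is positive, differentiable and nonincreasing on [r₀, ∞), satisfies L(x) → 0 as x → ∞, and satisfies x·L(x) ≥ ζ·(−L′(x)) for all x ≥ r₀. Then for every t > 0, ∫_{r₀}^∞ t·x·L(x)/(1 + t·L(x)) dx ≥ ζ·ln(1 + t·L(r₀)). -/
open MeasureTheory

/-- Let `r₀ ≥ 0`, `ζ > 0`, and let `L` be positive, differentiable and
nonincreasing on `[r₀, ∞)`, with `L(x) → 0` as `x → ∞` and `x·L(x) ≥ ζ·(−L′(x))` for all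
`x ≥ r₀`. Then for every `t > 0`,
`∫_{r₀}^∞ t·x·L(x)/(1 + t·L(x)) dx ≥ ζ·ln(1 + t·L(r₀))`
(the integral being a Lebesgue lower integral, possibly infinite). -/
theorem integral_lower_bound_log
    (r₀ ζ : ℝ) (hr₀ : 0 ≤ r₀) (hζ : 0 < ζ) (L L' : ℝ → ℝ)
    (hLpos : ∀ x, r₀ ≤ x → 0 < L x)
    (hLderiv : ∀ x, r₀ ≤ x → HasDerivAt L (L' x) x)
    (hLmono : ∀ x y, r₀ ≤ x → x ≤ y → L y ≤ L x)
    (hLlim : Filter.Tendsto L Filter.atTop (nhds 0))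
    (hreg : ∀ x, r₀ ≤ x → ζ * (-(L' x)) ≤ x * L x) :
    ∀ t : ℝ, 0 < t →
      ENNReal.ofReal (ζ * Real.log (1 + t * L r₀)) ≤
        ∫⁻ x in Set.Ioi r₀, ENNReal.ofReal (t * x * L x / (1 + t * L x)) := by
  intro t ht
  -- L' is nonpositive on [r₀, ∞)
  have hL'nonpos : ∀ x, r₀ ≤ x → L' x ≤ 0 := by
    intro x hx
    have hslope : Filter.Tendsto (slope L x) (nhdsWithin x (Set.Ioi x)) (nhds (L' x)) :=
      (hasDerivAt_iff_tendsto_slope.mp (hLderiv x hx)).mono_left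
        (nhdsWithin_mono x fun y hy => ne_of_gt hy)
    refine le_of_tendsto hslope ?_
    filter_upwards [self_mem_nhdsWithin] with y hy
    have hxy : x < y := hy
    have : L y ≤ L x := hLmono x y hx hxy.le
    have hpos : 0 < y - x := by linarith
    rw [slope_def_field]
    exact div_nonpos_of_nonpos_of_nonneg (by linarith) hpos.le
  have hden : ∀ x, r₀ ≤ x → 0 < 1 + t * L x := fun x hx => by
    have := hLpos x hx; nlinarith
  set c := ∫⁻ x in Set.Ioi r₀, ENNReal.ofReal (t * x * L x / (1 + t * L x)) with hc
  -- the key bound for every R ≥ r₀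
  have key : ∀ R, r₀ ≤ R →
      ENNReal.ofReal (ζ * (Real.log (1 + t * L r₀) - Real.log (1 + t * L R))) ≤ c := by
    intro R hR
    set g : ℝ → ℝ := fun x => ζ * (t * (-(L' x)) / (1 + t * L x)) with hg
    -- antiderivative
    have hF : ∀ x ∈ Set.uIcc r₀ R,
        HasDerivAt (fun y => -(ζ * Real.log (1 + t * L y))) (g x) x := by
      intro x hx
      rw [Set.uIcc_of_le hR] at hx
      have hx0 : r₀ ≤ x := hx.1
      have h1 : HasDerivAt (fun y => 1 + t * L y) (t * L' x) x :=
        (((hLderiv x hx0).const_mul t).const_add 1)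
      have h2 : HasDerivAt (fun y => Real.log (1 + t * L y))
          (t * L' x / (1 + t * L x)) x := h1.log (hden x hx0).ne'
      have h3 : HasDerivAt (fun y => -(ζ * Real.log (1 + t * L y))) _ x := (h2.const_mul ζ).neg
      convert h3 using 1
      show ζ * (t * (-(L' x)) / (1 + t * L x)) = -(ζ * (t * L' x / (1 + t * L x)))
      ring
    -- integrability of g on Ioc r₀ R
    have hmeas : AEStronglyMeasurable g (volume.restrict (Set.Ioc r₀ R)) := by
      have hLcont : ContinuousOn L (Set.Ioc r₀ R) := fun x hx =>
        (hLderiv x hx.1.le).continuousAt.continuousWithinAt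
      have hd : AEStronglyMeasurable (deriv L) (volume.restrict (Set.Ioc r₀ R)) :=
        (measurable_deriv L).aestronglyMeasurable
      have hL : AEStronglyMeasurable L (volume.restrict (Set.Ioc r₀ R)) :=
        hLcont.aestronglyMeasurable measurableSet_Ioc
      have h : AEStronglyMeasurable
          (fun x => ζ * (t * (-(deriv L x)) / (1 + t * L x)))
          (volume.restrict (Set.Ioc r₀ R)) := by
        exact ((((hd.aemeasurable.neg.const_mul t).div
          ((hL.aemeasurable.const_mul t).const_add 1)).const_mul ζ)).aestronglyMeasurable
      refine h.congr ?_
      rw [Filter.EventuallyEq, ae_restrict_iff' measurableSet_Ioc]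
      filter_upwards with x hx
      rw [(hLderiv x hx.1.le).deriv]
    have hgnonneg : ∀ x, r₀ ≤ x → 0 ≤ g x := by
      intro x hx
      have := hL'nonpos x hx
      have := hden x hx
      have : 0 ≤ t * (-(L' x)) / (1 + t * L x) :=
        div_nonneg (by nlinarith) (by linarith)
      positivity
    have hgle : ∀ x, r₀ ≤ x → g x ≤ t * x * L x / (1 + t * L x) := by
      intro x hx
      have h1 := hreg x hx
      have h2 := hden x hx
      have hgx : g x = t * (ζ * (-(L' x))) / (1 + t * L x) := by rw [hg]; ring
      rw [hgx]
      apply div_le_div_of_nonneg_right ?_ h2.le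
      have hx0' : 0 ≤ x := le_trans hr₀ hx
      nlinarith
    have hint : IntegrableOn g (Set.Ioc r₀ R) volume := by
      refine Integrable.mono' (g := fun _ => t * R * L r₀)
        (integrableOn_const measure_Ioc_lt_top.ne) hmeas ?_
      rw [ae_restrict_iff' measurableSet_Ioc]
      filter_upwards with x hx
      have hx0 : r₀ ≤ x := hx.1.le
      rw [Real.norm_of_nonneg (hgnonneg x hx0)]
      calc g x ≤ t * x * L x / (1 + t * L x) := hgle x hx0
        _ ≤ t * x * L x := by
            have h1 := hLpos x hx0
            have hx0' : 0 ≤ x := le_trans hr₀ hx0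
            exact div_le_self (mul_nonneg (mul_nonneg ht.le hx0') h1.le) (by nlinarith)
        _ ≤ t * R * L r₀ := by
            have h1 := hLpos x hx0
            have h2 := hLmono r₀ x le_rfl hx0
            have h3 : x ≤ R := hx.2
            have hx0' : 0 ≤ x := le_trans hr₀ hx0
            calc t * x * L x = t * (x * L x) := by ring
              _ ≤ t * (R * L r₀) :=
                  mul_le_mul_of_nonneg_left (mul_le_mul h3 h2 h1.le (hr₀.trans hR)) ht.le
              _ = t * R * L r₀ := by ring
    have hiint : IntervalIntegrable g volume r₀ R :=
      (intervalIntegrable_iff_integrableOn_Ioc_of_le hR).mpr hint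
    have hFTC := intervalIntegral.integral_eq_sub_of_hasDerivAt hF hiint
    have hval : ∫ x in Set.Ioc r₀ R, g x =
        ζ * (Real.log (1 + t * L r₀) - Real.log (1 + t * L R)) := by
      rw [← intervalIntegral.integral_of_le hR, hFTC]; ring
    calc ENNReal.ofReal (ζ * (Real.log (1 + t * L r₀) - Real.log (1 + t * L R)))
        = ENNReal.ofReal (∫ x in Set.Ioc r₀ R, g x) := by rw [hval]
      _ = ∫⁻ x in Set.Ioc r₀ R, ENNReal.ofReal (g x) := by
          refine ofReal_integral_eq_lintegral_ofReal hint ?_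
          rw [Filter.EventuallyLE, ae_restrict_iff' measurableSet_Ioc]
          filter_upwards with x hx
          exact hgnonneg x hx.1.le
      _ ≤ ∫⁻ x in Set.Ioc r₀ R, ENNReal.ofReal (t * x * L x / (1 + t * L x)) := by
          refine lintegral_mono_ae ?_
          rw [ae_restrict_iff' measurableSet_Ioc]
          filter_upwards with x hx
          exact ENNReal.ofReal_le_ofReal (hgle x hx.1.le)
      _ ≤ c := lintegral_mono_set Set.Ioc_subset_Ioi_self
  -- take the limit R → ∞
  have hlog : Filter.Tendsto (fun R => Real.log (1 + t * L R)) Filter.atTop (nhds 0) := by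
    have h1 : Filter.Tendsto (fun R => 1 + t * L R) Filter.atTop (nhds 1) := by
      have := (hLlim.const_mul t).const_add 1
      simpa using this
    have h2 : Filter.Tendsto Real.log (nhds 1) (nhds 0) := by
      have := (Real.continuousAt_log one_ne_zero).tendsto
      simpa using this
    exact h2.comp h1
  have hT : Filter.Tendsto
      (fun R => ENNReal.ofReal (ζ * (Real.log (1 + t * L r₀) - Real.log (1 + t * L R))))
      Filter.atTop (nhds (ENNReal.ofReal (ζ * Real.log (1 + t * L r₀)))) := by
    apply (ENNReal.continuous_ofReal.tendsto _).comp
    have : Filter.Tendsto (fun R => ζ * (Real.log (1 + t * L r₀) - Real.log (1 + t * L R)))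
        Filter.atTop (nhds (ζ * (Real.log (1 + t * L r₀) - 0))) :=
      ((tendsto_const_nhds.sub hlog).const_mul ζ)
    simpa using this
  exact le_of_tendsto hT (Filter.eventually_atTop.mpr ⟨r₀, fun R hR => key R hR⟩)
end

section
/- Let r₀ ≥ 0, ζ > 0, and let L : [0,∞) → (0,∞) be measurable, differentiable and nonincreasing on [r₀, ∞), with L(x) → 0 as x → ∞ and x·L(x) ≥ ζ·(−L′(x)) for all x ≥ r₀. Then for every λ > 1/(πζ), the double integral T₁ = ∫_0^∞ ∫_0^{r₀} 2πλ·r·t·exp( −πλr² − 2πλ·t·∫_{r₀}^∞ x·L(x)/(1+t·L(x)) dx ) dr dt satisfies T₁ ≤ (1 − e^{−πλ r₀²}) / ( L(r₀)² · (2πλζ − 1) · (2πλζ − 2) ); in particular T₁ is finite. -/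
open MeasureTheory

/-- The exponential `x ↦ e^{-x}` extended to `[0,∞]`, with `e^{-∞} = 0`. -/
noncomputable def expNeg (x : ENNReal) : ENNReal :=
  if x = ⊤ then 0 else ENNReal.ofReal (Real.exp (-x.toReal))

open Set Filter

lemma expNeg_ofReal {s : ℝ} (hs : 0 ≤ s) :
    expNeg (ENNReal.ofReal s) = ENNReal.ofReal (Real.exp (-s)) := by
  rw [expNeg, if_neg ENNReal.ofReal_ne_top, ENNReal.toReal_ofReal hs]

lemma expNeg_add (a b : ENNReal) : expNeg (a + b) = expNeg a * expNeg b := by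
  by_cases ha : a = ⊤
  · simp [expNeg, ha]
  by_cases hb : b = ⊤
  · simp [expNeg, hb]
  rw [expNeg, expNeg, expNeg, if_neg ha, if_neg hb, if_neg (by simp [ha, hb]),
    ENNReal.toReal_add ha hb, neg_add, Real.exp_add,
    ← ENNReal.ofReal_mul (Real.exp_nonneg _)]

lemma expNeg_anti {a b : ENNReal} (h : a ≤ b) : expNeg b ≤ expNeg a := by
  by_cases hb : b = ⊤
  · simp [expNeg, hb]
  have ha : a ≠ ⊤ := fun h' => hb (top_le_iff.mp (h' ▸ h))
  rw [expNeg, expNeg, if_neg ha, if_neg hb]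
  exact ENNReal.ofReal_le_ofReal (Real.exp_le_exp.mpr
    (neg_le_neg ((ENNReal.toReal_le_toReal ha hb).mpr h)))

lemma rint (A r₀ : ℝ) (hA : 0 < A) (hr₀ : 0 ≤ r₀) :
    ∫⁻ r in Ioo (0:ℝ) r₀, ENNReal.ofReal (2 * A * r) * expNeg (ENNReal.ofReal (A * r ^ 2))
      = ENNReal.ofReal (1 - Real.exp (-(A * r₀ ^ 2))) := by
  have hcont : Continuous fun r : ℝ => 2 * A * r * Real.exp (-(A * r ^ 2)) := by
    continuity
  have h1 : ∫⁻ r in Ioo (0:ℝ) r₀, ENNReal.ofReal (2 * A * r) * expNeg (ENNReal.ofReal (A * r ^ 2))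
      = ∫⁻ r in Ioo (0:ℝ) r₀, ENNReal.ofReal (2 * A * r * Real.exp (-(A * r ^ 2))) := by
    refine setLIntegral_congr_fun measurableSet_Ioo ?_
    intro r hr
    beta_reduce
    rw [expNeg_ofReal (by positivity), ← ENNReal.ofReal_mul (mul_nonneg (by linarith) hr.1.le)]
  rw [h1, ← ofReal_integral_eq_lintegral_ofReal
      ((hcont.integrableOn_Ioc (a := 0) (b := r₀)).mono_set Ioo_subset_Ioc_self)
      ((ae_restrict_iff' measurableSet_Ioo).mpr (Filter.Eventually.of_forall
        fun r hr => mul_nonneg (mul_nonneg (by linarith) hr.1.le) (Real.exp_nonneg _)))]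
  congr 1
  have : ∫ r in Ioo (0:ℝ) r₀, 2 * A * r * Real.exp (-(A * r ^ 2))
      = ∫ r in (0:ℝ)..r₀, 2 * A * r * Real.exp (-(A * r ^ 2)) := by
    rw [intervalIntegral.integral_of_le hr₀, ← integral_Ioc_eq_integral_Ioo]
  rw [this]
  have hderiv : ∀ r ∈ uIcc (0:ℝ) r₀,
      HasDerivAt (fun r : ℝ => -Real.exp (-(A * r ^ 2))) (2 * A * r * Real.exp (-(A * r ^ 2))) r := by
    intro r _
    have h1 : HasDerivAt (fun r : ℝ => -(A * r ^ 2)) (-(A * (2 * r))) r := by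
      exact ((hasDerivAt_pow 2 r).const_mul A).neg.congr_deriv (by norm_num)
    have := (h1.exp).neg
    refine this.congr_deriv ?_
    ring
  rw [intervalIntegral.integral_eq_sub_of_hasDerivAt hderiv (hcont.intervalIntegrable _ _)]
  simp [Real.exp_zero]
  ring

lemma tint_integral (c a : ℝ) (hc : 0 < c) (ha : 2 < a) :
    IntegrableOn (fun t : ℝ => t * (1 + c * t) ^ (-a)) (Ioi (0:ℝ)) ∧
    ∫ t in Ioi (0:ℝ), t * (1 + c * t) ^ (-a) = 1 / (c ^ 2 * (a - 1) * (a - 2)) := by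
  set G : ℝ → ℝ := fun t => (c ^ 2)⁻¹ *
    ((1 + c * t) ^ (2 - a) / (2 - a) - (1 + c * t) ^ (1 - a) / (1 - a)) with hG
  have n1 : (2:ℝ) - a ≠ 0 := by intro h; linarith
  have n2 : (1:ℝ) - a ≠ 0 := by intro h; linarith
  have nc : c ≠ 0 := hc.ne'
  have hbase : ∀ t : ℝ, t ∈ Ici (0:ℝ) → 0 < 1 + c * t := by
    intro t ht
    have : 0 ≤ c * t := mul_nonneg hc.le ht
    linarith
  have hderiv : ∀ t ∈ Ici (0:ℝ), HasDerivAt G (t * (1 + c * t) ^ (-a)) t := by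
    intro t ht
    have hb := hbase t ht
    have haff : HasDerivAt (fun t : ℝ => 1 + c * t) c t := by
      simpa using ((hasDerivAt_id t).const_mul c).const_add 1
    have h1 : HasDerivAt (fun t : ℝ => (1 + c * t) ^ (2 - a))
        (c * (2 - a) * (1 + c * t) ^ (2 - a - 1)) t :=
      haff.rpow_const (Or.inl hb.ne')
    have h2 : HasDerivAt (fun t : ℝ => (1 + c * t) ^ (1 - a))
        (c * (1 - a) * (1 + c * t) ^ (1 - a - 1)) t :=
      haff.rpow_const (Or.inl hb.ne')
    have := (((h1.div_const (2 - a)).sub (h2.div_const (1 - a))).const_mul ((c ^ 2)⁻¹))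
    refine this.congr_deriv ?_
    have e1 : (2 : ℝ) - a - 1 = 1 - a := by ring
    have e2 : (1 : ℝ) - a - 1 = -a := by ring
    rw [e1, e2]
    have h3 : (1 + c * t) ^ (1 - a) = (1 + c * t) * (1 + c * t) ^ (-a) := by
      rw [show (1:ℝ) - a = 1 + (-a) by ring, Real.rpow_add hb, Real.rpow_one]
    rw [h3]
    field_simp
    ring
  have htend : Tendsto G atTop (nhds 0) := by
    have hat : Tendsto (fun t : ℝ => 1 + c * t) atTop atTop :=
      tendsto_atTop_add_const_left _ 1 (tendsto_id.const_mul_atTop hc)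
    have t1 : Tendsto (fun t : ℝ => (1 + c * t) ^ (2 - a)) atTop (nhds 0) := by
      have := (tendsto_rpow_neg_atTop (by linarith : (0:ℝ) < a - 2)).comp hat
      simpa [Function.comp_def, neg_sub] using this
    have t2 : Tendsto (fun t : ℝ => (1 + c * t) ^ (1 - a)) atTop (nhds 0) := by
      have := (tendsto_rpow_neg_atTop (by linarith : (0:ℝ) < a - 1)).comp hat
      simpa [Function.comp_def, neg_sub] using this
    have := (((t1.div_const (2 - a)).sub (t2.div_const (1 - a))).const_mul ((c ^ 2)⁻¹))
    simpa using this
  have hnn : ∀ t ∈ Ioi (0:ℝ), 0 ≤ t * (1 + c * t) ^ (-a) := by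
    intro t ht
    exact mul_nonneg (le_of_lt ht) (Real.rpow_nonneg (hbase t (mem_Ici.mpr (le_of_lt (mem_Ioi.mp ht)))).le _)
  refine ⟨integrableOn_Ioi_deriv_of_nonneg' (fun t ht => hderiv t ht) hnn htend, ?_⟩
  rw [integral_Ioi_of_hasDerivAt_of_nonneg' (fun t ht => hderiv t ht) hnn htend]
  have : G 0 = (c ^ 2)⁻¹ * (1 / (2 - a) - 1 / (1 - a)) := by
    simp [hG, Real.one_rpow]
  rw [this]
  have hne : c ^ 2 * (a - 1) * (a - 2) ≠ 0 :=
    mul_ne_zero (mul_ne_zero (pow_ne_zero 2 nc) (sub_ne_zero.mpr (by linarith)))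
      (sub_ne_zero.mpr (by linarith))
  rw [eq_div_iff hne]
  field_simp
  ring

lemma deriv_nonpos_of_antitone (r₀ : ℝ) (L L' : ℝ → ℝ)
    (hLderiv : ∀ x, r₀ ≤ x → HasDerivAt L (L' x) x)
    (hLmono : ∀ x y, r₀ ≤ x → x ≤ y → L y ≤ L x) :
    ∀ x, r₀ ≤ x → L' x ≤ 0 := by
  intro x hx
  have h := (hLderiv x hx)
  rw [hasDerivAt_iff_tendsto_slope] at h
  have h' : Tendsto (slope L x) (nhdsWithin x (Ioi x)) (nhds (L' x)) :=
    h.mono_left (nhdsWithin_mono x (fun y hy => ne_of_gt hy))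
  refine le_of_tendsto h' ?_
  filter_upwards [self_mem_nhdsWithin] with y hy
  have hyx : x < y := hy
  rw [slope_def_field]
  have : L y ≤ L x := hLmono x y hx hyx.le
  have hd : 0 < y - x := by linarith
  exact div_nonpos_of_nonpos_of_nonneg (by linarith) hd.le

lemma jlb (r₀ ζ t : ℝ) (hr₀ : 0 ≤ r₀) (hζ : 0 < ζ) (ht : 0 < t) (L L' : ℝ → ℝ)
    (hLpos : ∀ x, 0 ≤ x → 0 < L x)
    (hLderiv : ∀ x, r₀ ≤ x → HasDerivAt L (L' x) x)
    (hLmono : ∀ x y, r₀ ≤ x → x ≤ y → L y ≤ L x)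
    (hLlim : Filter.Tendsto L Filter.atTop (nhds 0))
    (hreg : ∀ x, r₀ ≤ x → ζ * (-(L' x)) ≤ x * L x) :
    ENNReal.ofReal (ζ / t * Real.log (1 + t * L r₀)) ≤
      ∫⁻ x in Ioi r₀, ENNReal.ofReal (x * L x / (1 + t * L x)) := by
  set g' : ℝ → ℝ := fun x => ζ * (-(L' x)) / (1 + t * L x) with hg'
  set G : ℝ → ℝ := fun x => -(ζ / t) * Real.log (1 + t * L x) with hG
  have hpos : ∀ x, r₀ ≤ x → 0 < 1 + t * L x := by
    intro x hx
    have := hLpos x (hr₀.trans hx)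
    nlinarith
  have hLpNeg := deriv_nonpos_of_antitone r₀ L L' hLderiv hLmono
  have hd : ∀ x ∈ Ici r₀, HasDerivAt G (g' x) x := by
    intro x hx
    have haff : HasDerivAt (fun x => 1 + t * L x) (t * L' x) x :=
      ((hLderiv x hx).const_mul t).const_add 1
    have hlog := haff.log (hpos x hx).ne'
    have := hlog.const_mul (-(ζ / t))
    refine this.congr_deriv ?_
    simp only [hg']
    field_simp [ht.ne', (hpos x hx).ne']
  have hnn : ∀ x ∈ Ioi r₀, 0 ≤ g' x := by
    intro x hx
    have h1 : 0 ≤ -(L' x) := neg_nonneg.mpr (hLpNeg x (le_of_lt hx))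
    exact div_nonneg (mul_nonneg hζ.le h1) (hpos x (le_of_lt hx)).le
  have htend : Tendsto G atTop (nhds 0) := by
    have h1 : Tendsto (fun x => 1 + t * L x) atTop (nhds 1) := by
      have := (hLlim.const_mul t).const_add 1
      simpa using this
    have h2 : Tendsto (fun x => Real.log (1 + t * L x)) atTop (nhds 0) := by
      have := (Real.continuousAt_log one_ne_zero).tendsto.comp h1
      simpa [Function.comp_def] using this
    have := h2.const_mul (-(ζ / t))
    simpa [hG, neg_mul] using this
  have hint := integral_Ioi_of_hasDerivAt_of_nonneg' hd hnn htend
  have hintg := integrableOn_Ioi_deriv_of_nonneg' hd hnn htend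
  have e1 : ENNReal.ofReal (ζ / t * Real.log (1 + t * L r₀)) =
      ENNReal.ofReal (∫ x in Ioi r₀, g' x) := by
    rw [hint]
    congr 1
    simp only [hG, zero_sub, neg_mul, neg_neg]
  rw [e1, ofReal_integral_eq_lintegral_ofReal hintg
    ((ae_restrict_iff' measurableSet_Ioi).mpr (Filter.Eventually.of_forall hnn))]
  refine setLIntegral_mono' measurableSet_Ioi fun x hx => ?_
  refine ENNReal.ofReal_le_ofReal ?_
  have hx' : r₀ ≤ x := le_of_lt hx
  simp only [hg']
  exact (div_le_div_iff_of_pos_right (hpos x hx')).mpr (hreg x hx')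

/-- Let `r₀ ≥ 0`, `ζ > 0`, and `L : [0,∞) → (0,∞)` measurable, differentiable
and nonincreasing on `[r₀,∞)`, with `L(x) → 0` as `x → ∞` and `x·L(x) ≥ ζ·(−L′(x))` for
`x ≥ r₀`. Then for every `λ > 1/(πζ)`, the double integral
`T₁ = ∫_0^∞ ∫_0^{r₀} 2πλ·r·t·exp(−πλr² − 2πλ·t·∫_{r₀}^∞ x·L(x)/(1+t·L(x)) dx) dr dt`
satisfies `T₁ ≤ (1 − e^{−πλr₀²}) / (L(r₀)²·(2πλζ − 1)·(2πλζ − 2))`; in particular `T₁`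
is finite. -/
theorem second_negative_moment_T1_bound
    (r₀ ζ lam : ℝ) (hr₀ : 0 ≤ r₀) (hζ : 0 < ζ) (L L' : ℝ → ℝ)
    (hLmeas : Measurable L)
    (hLpos : ∀ x, 0 ≤ x → 0 < L x)
    (hLderiv : ∀ x, r₀ ≤ x → HasDerivAt L (L' x) x)
    (hLmono : ∀ x y, r₀ ≤ x → x ≤ y → L y ≤ L x)
    (hLlim : Filter.Tendsto L Filter.atTop (nhds 0))
    (hreg : ∀ x, r₀ ≤ x → ζ * (-(L' x)) ≤ x * L x)
    (hlam : 1 / (Real.pi * ζ) < lam) :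
    (∫⁻ t in Set.Ioi (0 : ℝ), ∫⁻ r in Set.Ioo (0 : ℝ) r₀,
        ENNReal.ofReal (2 * Real.pi * lam * r * t) *
          expNeg (ENNReal.ofReal (Real.pi * lam * r ^ 2) +
            ENNReal.ofReal (2 * Real.pi * lam * t) *
              ∫⁻ x in Set.Ioi r₀, ENNReal.ofReal (x * L x / (1 + t * L x)))) ≤
      ENNReal.ofReal ((1 - Real.exp (-(Real.pi * lam * r₀ ^ 2))) /
        (L r₀ ^ 2 * (2 * Real.pi * lam * ζ - 1) * (2 * Real.pi * lam * ζ - 2))) ∧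
    (∫⁻ t in Set.Ioi (0 : ℝ), ∫⁻ r in Set.Ioo (0 : ℝ) r₀,
        ENNReal.ofReal (2 * Real.pi * lam * r * t) *
          expNeg (ENNReal.ofReal (Real.pi * lam * r ^ 2) +
            ENNReal.ofReal (2 * Real.pi * lam * t) *
              ∫⁻ x in Set.Ioi r₀, ENNReal.ofReal (x * L x / (1 + t * L x)))) < ⊤ := by
  have hπζ : 0 < Real.pi * ζ := mul_pos Real.pi_pos hζ
  have hlam0 : 0 < lam := lt_trans (by positivity) hlam
  have h1lt : 1 < lam * (Real.pi * ζ) := (div_lt_iff₀ hπζ).mp hlam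
  have ha : 2 < 2 * Real.pi * lam * ζ := by nlinarith
  have hcpos : 0 < L r₀ := hLpos r₀ hr₀
  have hApos : 0 < Real.pi * lam := mul_pos Real.pi_pos hlam0
  have hsub : 0 ≤ 1 - Real.exp (-(Real.pi * lam * r₀ ^ 2)) := by
    have : Real.exp (-(Real.pi * lam * r₀ ^ 2)) ≤ Real.exp 0 :=
      Real.exp_le_exp.mpr (by nlinarith)
    simpa [Real.exp_zero] using this
  have hfmeas : Measurable fun r : ℝ =>
      ENNReal.ofReal (2 * (Real.pi * lam) * r) * expNeg (ENNReal.ofReal (Real.pi * lam * r ^ 2)) := by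
    have e : ∀ r : ℝ, expNeg (ENNReal.ofReal (Real.pi * lam * r ^ 2))
        = ENNReal.ofReal (Real.exp (-(Real.pi * lam * r ^ 2))) :=
      fun r => expNeg_ofReal (by positivity)
    simp only [e]
    exact ((measurable_const.mul measurable_id).ennreal_ofReal).mul
      ((measurable_id.pow_const 2 |>.const_mul (Real.pi * lam)).neg.exp.ennreal_ofReal)
  have key : ∀ t ∈ Set.Ioi (0:ℝ),
      (∫⁻ r in Set.Ioo (0:ℝ) r₀,
        ENNReal.ofReal (2 * Real.pi * lam * r * t) *
          expNeg (ENNReal.ofReal (Real.pi * lam * r ^ 2) +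
            ENNReal.ofReal (2 * Real.pi * lam * t) *
              ∫⁻ x in Set.Ioi r₀, ENNReal.ofReal (x * L x / (1 + t * L x)))) ≤
      ENNReal.ofReal (1 - Real.exp (-(Real.pi * lam * r₀ ^ 2))) *
        ENNReal.ofReal (t * (1 + L r₀ * t) ^ (-(2 * Real.pi * lam * ζ))) := by
    intro t ht
    have ht' : (0:ℝ) < t := ht
    set Et : ENNReal := ENNReal.ofReal (2 * Real.pi * lam * t) *
        ∫⁻ x in Set.Ioi r₀, ENNReal.ofReal (x * L x / (1 + t * L x)) with hEt
    have step1 : (∫⁻ r in Set.Ioo (0:ℝ) r₀,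
          ENNReal.ofReal (2 * Real.pi * lam * r * t) *
            expNeg (ENNReal.ofReal (Real.pi * lam * r ^ 2) + Et))
        = (∫⁻ r in Set.Ioo (0:ℝ) r₀, ENNReal.ofReal (2 * (Real.pi * lam) * r) *
            expNeg (ENNReal.ofReal (Real.pi * lam * r ^ 2))) * (ENNReal.ofReal t * expNeg Et) := by
      rw [← lintegral_mul_const _ hfmeas]
      refine setLIntegral_congr_fun measurableSet_Ioo ?_
      intro r hr
      beta_reduce
      rw [expNeg_add, show 2 * Real.pi * lam * r * t = (2 * (Real.pi * lam) * r) * t by ring,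
        ENNReal.ofReal_mul (by nlinarith [hr.1] : (0:ℝ) ≤ 2 * (Real.pi * lam) * r)]
      ring
    rw [step1, rint (Real.pi * lam) r₀ hApos hr₀]
    refine mul_le_mul_right ?_ _
    -- bound ofReal t * expNeg Et
    have hJ := jlb r₀ ζ t hr₀ hζ ht' L L' hLpos hLderiv hLmono hLlim hreg
    have h2 : ENNReal.ofReal (2 * Real.pi * lam * ζ * Real.log (1 + L r₀ * t)) ≤ Et := by
      calc ENNReal.ofReal (2 * Real.pi * lam * ζ * Real.log (1 + L r₀ * t))
          = ENNReal.ofReal (2 * Real.pi * lam * t) *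
              ENNReal.ofReal (ζ / t * Real.log (1 + t * L r₀)) := by
            rw [← ENNReal.ofReal_mul (by positivity)]
            congr 1
            rw [show (1:ℝ) + t * L r₀ = 1 + L r₀ * t by ring]
            field_simp
        _ ≤ Et := mul_le_mul_right hJ _
    have hX : (0:ℝ) < 1 + L r₀ * t := by nlinarith
    have h3 : expNeg Et ≤ ENNReal.ofReal ((1 + L r₀ * t) ^ (-(2 * Real.pi * lam * ζ))) := by
      refine (expNeg_anti h2).trans_eq ?_
      rw [expNeg_ofReal (mul_nonneg (by positivity) (Real.log_nonneg (by nlinarith)))]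
      congr 1
      rw [Real.rpow_def_of_pos hX]
      congr 1
      ring
    calc ENNReal.ofReal t * expNeg Et
        ≤ ENNReal.ofReal t * ENNReal.ofReal ((1 + L r₀ * t) ^ (-(2 * Real.pi * lam * ζ))) :=
          mul_le_mul_right h3 _
      _ = ENNReal.ofReal (t * (1 + L r₀ * t) ^ (-(2 * Real.pi * lam * ζ))) :=
          (ENNReal.ofReal_mul ht'.le).symm
  have htint := tint_integral (L r₀) (2 * Real.pi * lam * ζ) hcpos ha
  have main : (∫⁻ t in Set.Ioi (0 : ℝ), ∫⁻ r in Set.Ioo (0 : ℝ) r₀,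
        ENNReal.ofReal (2 * Real.pi * lam * r * t) *
          expNeg (ENNReal.ofReal (Real.pi * lam * r ^ 2) +
            ENNReal.ofReal (2 * Real.pi * lam * t) *
              ∫⁻ x in Set.Ioi r₀, ENNReal.ofReal (x * L x / (1 + t * L x)))) ≤
      ENNReal.ofReal ((1 - Real.exp (-(Real.pi * lam * r₀ ^ 2))) /
        (L r₀ ^ 2 * (2 * Real.pi * lam * ζ - 1) * (2 * Real.pi * lam * ζ - 2))) := by
    calc (∫⁻ t in Set.Ioi (0 : ℝ), ∫⁻ r in Set.Ioo (0 : ℝ) r₀,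
          ENNReal.ofReal (2 * Real.pi * lam * r * t) *
            expNeg (ENNReal.ofReal (Real.pi * lam * r ^ 2) +
              ENNReal.ofReal (2 * Real.pi * lam * t) *
                ∫⁻ x in Set.Ioi r₀, ENNReal.ofReal (x * L x / (1 + t * L x))))
        ≤ ∫⁻ t in Set.Ioi (0:ℝ), ENNReal.ofReal (1 - Real.exp (-(Real.pi * lam * r₀ ^ 2))) *
            ENNReal.ofReal (t * (1 + L r₀ * t) ^ (-(2 * Real.pi * lam * ζ))) :=
          setLIntegral_mono' measurableSet_Ioi key
      _ = ENNReal.ofReal (1 - Real.exp (-(Real.pi * lam * r₀ ^ 2))) *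
            ∫⁻ t in Set.Ioi (0:ℝ),
              ENNReal.ofReal (t * (1 + L r₀ * t) ^ (-(2 * Real.pi * lam * ζ))) :=
          lintegral_const_mul' _ _ ENNReal.ofReal_ne_top
      _ = ENNReal.ofReal (1 - Real.exp (-(Real.pi * lam * r₀ ^ 2))) *
            ENNReal.ofReal (1 / (L r₀ ^ 2 * (2 * Real.pi * lam * ζ - 1) *
              (2 * Real.pi * lam * ζ - 2))) := by
          rw [← ofReal_integral_eq_lintegral_ofReal htint.1
            ((ae_restrict_iff' measurableSet_Ioi).mpr (Filter.Eventually.of_forall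
              fun t ht => mul_nonneg (le_of_lt ht)
                (Real.rpow_nonneg (by nlinarith [Set.mem_Ioi.mp ht] : (0:ℝ) ≤ 1 + L r₀ * t) _))),
            htint.2]
      _ = ENNReal.ofReal ((1 - Real.exp (-(Real.pi * lam * r₀ ^ 2))) /
            (L r₀ ^ 2 * (2 * Real.pi * lam * ζ - 1) * (2 * Real.pi * lam * ζ - 2))) := by
          rw [← ENNReal.ofReal_mul hsub, mul_one_div]
  exact ⟨main, lt_of_le_of_lt main ENNReal.ofReal_lt_top⟩
end
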